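/- Let q be a prime power and 1 ≤ n ≤ q−1. If the monomial digraph D(q; n, n) is strong and q > (n−1)⁴, then diam(D(q; n, n)) ≤ 9. -/

import Mathlib

/-- `walkLen r k x y` means there is a directed walk of length exactly `k`
from `x` to `y` in the digraph with arc relation `r`. -/
def walkLen {V : Type*} (r : V → V → Prop) : ℕ → V → V → Prop
  | 0 => fun x y => x = y
  | k + 1 => fun x y => ∃ z, r x z ∧ walkLen r k z y

/-- The distance from `x` to `y`: the minimum length of a directed walk,
`⊤` if `y` is not reachable from `x`. -/
noncomputable def ddist {V : Type*} (r : V → V → Prop) (x y : V) : ℕ∞ :=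
  ⨅ n ∈ {n : ℕ | walkLen r n x y}, (n : ℕ∞)

/-- The diameter of the digraph: the maximum of distances over all ordered pairs. -/
noncomputable def ddiam {V : Type*} (r : V → V → Prop) : ℕ∞ :=
  ⨆ x, ⨆ y, ddist r x y

/-- A digraph is strong if every vertex is reachable from every vertex. -/
def IsStrongDigraph {V : Type*} (r : V → V → Prop) : Prop :=
  ∀ x y : V, ∃ n : ℕ, walkLen r n x y

/-- The arc relation of the monomial digraph `D(q; m, n)`:
`(x₁, x₂) → (y₁, y₂)` iff `x₂ + y₂ = x₁ ^ m * y₁ ^ n`. -/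
def monomialArc {F : Type*} [Field F] (m n : ℕ) (x y : F × F) : Prop :=
  x.2 + y.2 = x.1 ^ m * y.1 ^ n

/-! ### Auxiliary lemmas -/

section Plumbing

variable {V : Type*} {r : V → V → Prop}

lemma walkLen_succ_iff {k : ℕ} {x y : V} :
    walkLen r (k + 1) x y ↔ ∃ z, r x z ∧ walkLen r k z y := Iff.rfl

lemma walkLen_append_right {k : ℕ} {x z y : V} (h : walkLen r k x z) (ha : r z y) :
    walkLen r (k + 1) x y := by
  induction k generalizing x with
  | zero => cases h; exact ⟨y, ha, rfl⟩
  | succ k ih =>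
      obtain ⟨w, hw, hrest⟩ := h
      exact ⟨w, hw, ih hrest⟩

lemma ddist_le_of_walkLen {k : ℕ} {x y : V} (h : walkLen r k x y) :
    ddist r x y ≤ (k : ℕ∞) := by
  unfold ddist
  exact iInf₂_le k h

lemma ddiam_le_of_walks {m : ℕ} (h : ∀ x y : V, ∃ k ≤ m, walkLen r k x y) :
    ddiam r ≤ (m : ℕ∞) := by
  refine iSup_le fun x => iSup_le fun y => ?_
  obtain ⟨k, hk, hw⟩ := h x y
  exact (ddist_le_of_walkLen hw).trans (by exact_mod_cast hk)

end Plumbing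

section Field

variable {F : Type*} [Field F]

/-- `x` is a nonzero `n`-th power. -/
def IsNthPow (n : ℕ) (x : F) : Prop := ∃ y : F, y ≠ 0 ∧ y ^ n = x

/-- The representation property driving the walk construction. -/
def RepOK (n : ℕ) (c : F) : Prop :=
  (∃ A B C D : F, IsNthPow n A ∧ IsNthPow n B ∧ IsNthPow n C ∧
      (D = 0 ∨ IsNthPow n D) ∧ A - B + C - D = c) ∨
  (∃ D : F, (D = 0 ∨ IsNthPow n D) ∧ c = -D)

variable {n : ℕ}

lemma arc_iff {x₁ x₂ y₁ y₂ : F} :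
    monomialArc n n (x₁, x₂) (y₁, y₂) ↔ x₂ + y₂ = x₁ ^ n * y₁ ^ n := Iff.rfl

lemma walk_main (hn1 : 1 ≤ n) (a b u v : F) (hu : u ≠ 0)
    (h : ∃ A B C D : F, IsNthPow n A ∧ IsNthPow n B ∧ IsNthPow n C ∧
      (D = 0 ∨ IsNthPow n D) ∧ A - B + C - D = v - b) :
    walkLen (monomialArc (F := F) n n) 6 (a, b) (u, v) := by
  obtain ⟨A, B, C, D, ⟨α, hα, hA⟩, ⟨β, hβ, hB⟩, ⟨γ, hγ, hC⟩, hD, hsum⟩ := h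
  have hn0 : n ≠ 0 := by omega
  set x₄ : F := α / u with hx₄
  have hx₄0 : x₄ ≠ 0 := div_ne_zero hα hu
  set x₃ : F := β / x₄ with hx₃
  have hx₃0 : x₃ ≠ 0 := div_ne_zero hβ hx₄0
  set x₂ : F := γ / x₃ with hx₂
  have hx₂0 : x₂ ≠ 0 := div_ne_zero hγ hx₃0
  have e₄ : x₄ ^ n * u ^ n = A := by
    rw [hx₄, div_pow, div_mul_cancel₀ _ (pow_ne_zero n hu), hA]
  have e₃ : x₃ ^ n * x₄ ^ n = B := by
    rw [hx₃, div_pow, div_mul_cancel₀ _ (pow_ne_zero n hx₄0), hB]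
  have e₂ : x₂ ^ n * x₃ ^ n = C := by
    rw [hx₂, div_pow, div_mul_cancel₀ _ (pow_ne_zero n hx₃0), hC]
  obtain hD0 | ⟨δ, hδ, hDeq⟩ := hD
  · refine ⟨(0, -b), ?_, (0, b), ?_, (x₂, D - b), ?_, (x₃, C - D + b), ?_,
      (x₄, B - C + D - b), ?_, (u, v), ?_, rfl⟩
    · show b + -b = a ^ n * 0 ^ n; rw [zero_pow hn0]; ring
    · show -b + b = 0 ^ n * 0 ^ n; rw [zero_pow hn0]; ring
    · show b + (D - b) = 0 ^ n * x₂ ^ n; rw [zero_pow hn0, hD0]; ring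
    · show (D - b) + (C - D + b) = x₂ ^ n * x₃ ^ n; rw [e₂]; ring
    · show (C - D + b) + (B - C + D - b) = x₃ ^ n * x₄ ^ n; rw [e₃]; ring
    · show (B - C + D - b) + v = x₄ ^ n * u ^ n
      rw [e₄]; linear_combination -hsum
  · set x₁ : F := δ / x₂ with hx₁
    have e₁ : x₁ ^ n * x₂ ^ n = D := by
      rw [hx₁, div_pow, div_mul_cancel₀ _ (pow_ne_zero n hx₂0), hDeq]
    refine ⟨(0, -b), ?_, (x₁, b), ?_, (x₂, D - b), ?_, (x₃, C - D + b), ?_,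
      (x₄, B - C + D - b), ?_, (u, v), ?_, rfl⟩
    · show b + -b = a ^ n * 0 ^ n; rw [zero_pow hn0]; ring
    · show -b + b = 0 ^ n * x₁ ^ n; rw [zero_pow hn0]; ring
    · show b + (D - b) = x₁ ^ n * x₂ ^ n; rw [e₁]; ring
    · show (D - b) + (C - D + b) = x₂ ^ n * x₃ ^ n; rw [e₂]; ring
    · show (C - D + b) + (B - C + D - b) = x₃ ^ n * x₄ ^ n; rw [e₃]; ring
    · show (B - C + D - b) + v = x₄ ^ n * u ^ n
      rw [e₄]; linear_combination -hsum

lemma walk_zero_pattern (hn1 : 1 ≤ n) (a b u : F) {D : F} (hD : D = 0 ∨ IsNthPow n D) :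
    walkLen (monomialArc (F := F) n n) 6 (a, b) (u, b - D) := by
  have hn0 : n ≠ 0 := by omega
  obtain hD0 | ⟨δ, hδ, hDeq⟩ := hD
  · refine ⟨(0, -b), ?_, (0, b), ?_, (0, D - b), ?_, (0, b - D), ?_,
      (0, D - b), ?_, (u, b - D), ?_, rfl⟩ <;>
      · show _ + _ = _ ^ n * _ ^ n
        rw [zero_pow hn0]
        try rw [hD0]
        ring
  · refine ⟨(0, -b), ?_, (1, b), ?_, (δ, D - b), ?_, (0, b - D), ?_,
      (0, D - b), ?_, (u, b - D), ?_, rfl⟩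
    · show b + -b = a ^ n * 0 ^ n; rw [zero_pow hn0]; ring
    · show -b + b = 0 ^ n * 1 ^ n; rw [zero_pow hn0]; ring
    · show b + (D - b) = 1 ^ n * δ ^ n; rw [one_pow, hDeq]; ring
    · show (D - b) + (b - D) = δ ^ n * 0 ^ n; rw [zero_pow hn0]; ring
    · show (b - D) + (D - b) = 0 ^ n * 0 ^ n; rw [zero_pow hn0]; ring
    · show (D - b) + (b - D) = 0 ^ n * u ^ n; rw [zero_pow hn0]; ring

lemma walks_of_rep (hn1 : 1 ≤ n) (hmaster : ∀ c : F, RepOK n c) :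
    ∀ x y : F × F, ∃ k ≤ 9, walkLen (monomialArc (F := F) n n) k x y := by
  have key : ∀ (a b u v : F), u ≠ 0 →
      walkLen (monomialArc (F := F) n n) 6 (a, b) (u, v) := by
    intro a b u v hu
    rcases hmaster (v - b) with h | ⟨D, hD, hc⟩
    · exact walk_main hn1 a b u v hu h
    · have : v = b - D := by linear_combination hc
      rw [this]
      exact walk_zero_pattern hn1 a b u hD
  rintro ⟨a, b⟩ ⟨u, v⟩
  by_cases hu : u = 0
  · subst hu
    refine ⟨7, by norm_num, walkLen_append_right (key a b 1 (-v) one_ne_zero) ?_⟩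
    show -v + v = (1:F) ^ n * 0 ^ n
    rw [zero_pow (by omega : n ≠ 0)]; ring
  · exact ⟨6, by norm_num, key a b u v hu⟩

end Field

section Field

variable {F : Type*} [Field F] [Fintype F] {n : ℕ}

lemma isNthPow_one (n : ℕ) : IsNthPow (F := F) n 1 := ⟨1, one_ne_zero, one_pow n⟩

/-- from sum-of-two-nth-powers to RepOK -/
lemma repOK_of_sum2
    (h2 : ∀ t : F, t ≠ 0 → ∃ a b : F, IsNthPow n a ∧ IsNthPow n b ∧ a + b = t)
    (hH2 : ∃ h : F, IsNthPow n h ∧ h ≠ 1) : ∀ c : F, RepOK n c := by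
  intro c
  by_cases hc : c = 0
  · exact Or.inr ⟨0, Or.inl rfl, by rw [hc, neg_zero]⟩
  obtain ⟨h, hh, hh1⟩ := hH2
  obtain ⟨B, hB, hBne⟩ : ∃ B : F, IsNthPow n B ∧ c + B ≠ 0 := by
    by_cases h1 : c + 1 = 0
    · refine ⟨h, hh, fun hch => hh1 ?_⟩
      have : c = -1 := by linear_combination h1
      rw [this] at hch; linear_combination hch
    · exact ⟨1, isNthPow_one n, h1⟩
  obtain ⟨A, C, hA, hC, hAC⟩ := h2 (c + B) hBne
  exact Or.inl ⟨A, B, C, 0, hA, hB, hC, Or.inl rfl, by linear_combination hAC⟩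

/-- card 2 case -/
lemma repOK_card_two (hcard : Fintype.card F = 2) (hn1 : 1 ≤ n) : ∀ c : F, RepOK n c := by
  intro c
  by_cases hc : c = 0
  · exact Or.inr ⟨0, Or.inl rfl, by rw [hc, neg_zero]⟩
  · have h1 : c = 1 := by
      have := FiniteField.pow_card_sub_one_eq_one c hc
      rwa [hcard, pow_one] at this
    exact Or.inl ⟨1, 1, 1, 0, isNthPow_one n, isNthPow_one n, isNthPow_one n,
      Or.inl rfl, by rw [h1]; ring⟩

/-- card 3, n even case -/
lemma repOK_card_three (hcard : Fintype.card F = 3) (hne : 2 ∣ n) (hn1 : 1 ≤ n) :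
    ∀ c : F, RepOK n c := by
  have hpow : ∀ x : F, x ≠ 0 → x ^ n = 1 := by
    intro x hx
    obtain ⟨m, rfl⟩ := hne
    have h2 : x ^ 2 = 1 := by
      have := FiniteField.pow_card_sub_one_eq_one x hx
      rwa [hcard] at this
    rw [pow_mul, h2, one_pow]
  intro c
  by_cases hc : c = 0
  · exact Or.inr ⟨0, Or.inl rfl, by rw [hc, neg_zero]⟩
  have h2 : (c - 1) * (c + 1) = 0 := by
    have hcc : c ^ 2 = 1 := by
      have := FiniteField.pow_card_sub_one_eq_one c hc
      rwa [hcard] at this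
    linear_combination hcc
  rcases mul_eq_zero.mp h2 with h | h
  · have h1 : c = 1 := by linear_combination h
    exact Or.inl ⟨1, 1, 1, 0, isNthPow_one n, isNthPow_one n, isNthPow_one n,
      Or.inl rfl, by rw [h1]; ring⟩
  · have h1 : c = -1 := by linear_combination h
    exact Or.inr ⟨1, Or.inr (isNthPow_one n), by rw [h1]⟩

/-- card 5, gcd(n,4) = 2 case -/
lemma repOK_card_five (hcard : Fintype.card F = 5) (h2 : 2 ∣ n) (h4 : ¬ 4 ∣ n)
    (hn1 : 1 ≤ n) : ∀ c : F, RepOK n c := by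
  have h5 : (5 : F) = 0 := by
    have := FiniteField.cast_card_eq_zero F
    rwa [hcard] at this
  have h2ne : (2 : F) ≠ 0 := by
    intro h
    have : (1 : F) = 0 := by linear_combination h5 - 2 * h
    exact one_ne_zero this
  -- x^n = x^2 for x ≠ 0
  obtain ⟨m, hm⟩ := h2
  have hmodd : Odd m := by
    rcases Nat.even_or_odd m with he | ho
    · obtain ⟨k, hk⟩ := he; exact absurd ⟨k, by omega⟩ h4
    · exact ho
  have hpow : ∀ x : F, x ≠ 0 → x ^ n = x ^ 2 := by
    intro x hx
    have hx4 : x ^ 4 = 1 := by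
      have := FiniteField.pow_card_sub_one_eq_one x hx
      rwa [hcard] at this
    have hsq : x ^ 2 = 1 ∨ x ^ 2 = -1 := by
      have : (x ^ 2 - 1) * (x ^ 2 + 1) = 0 := by linear_combination hx4
      rcases mul_eq_zero.mp this with h | h
      · exact Or.inl (by linear_combination h)
      · exact Or.inr (by linear_combination h)
    rw [hm, pow_mul]
    rcases hsq with h | h
    · rw [h]; exact one_pow m
    · rw [h]; exact hmodd.neg_one_pow
  have hneg1 : IsNthPow (F := F) n (-1) :=
    ⟨2, h2ne, by rw [hpow 2 h2ne]; linear_combination h5⟩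
  intro c
  -- c ∈ {0, 1, -1, 2, -2}
  by_cases hc : c = 0
  · exact Or.inr ⟨0, Or.inl rfl, by rw [hc, neg_zero]⟩
  have hc4 : c ^ 4 = 1 := by
    have := FiniteField.pow_card_sub_one_eq_one c hc
    rwa [hcard] at this
  have hfac : (c - 1) * (c + 1) * ((c - 2) * (c + 2)) = 0 := by
    linear_combination hc4 + (1 - c^2) * h5
  have h1 := isNthPow_one (F := F) n
  rcases mul_eq_zero.mp hfac with h | h
  · rcases mul_eq_zero.mp h with h' | h'
    · have : c = 1 := by linear_combination h'
      exact Or.inl ⟨1, 1, 1, 0, h1, h1, h1, Or.inl rfl, by rw [this]; ring⟩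
    · have : c = -1 := by linear_combination h'
      exact Or.inr ⟨1, Or.inr h1, by rw [this]⟩
  · rcases mul_eq_zero.mp h with h' | h'
    · have : c = 2 := by linear_combination h'
      exact Or.inl ⟨1, -1, 1, 1, h1, hneg1, h1, Or.inr h1, by rw [this]; ring⟩
    · have : c = -2 := by linear_combination h'
      exact Or.inl ⟨1, -1, 1, 0, h1, hneg1, h1, Or.inl rfl,
        by rw [this]; linear_combination h5⟩

end Field

section Weil

variable {F : Type*} [Field F] [Fintype F] {n : ℕ}

/-- A character whose order is `gcd(n, q-1)` kills only nonzero n-th powers. -/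
lemma ker_isNthPow (hn1 : 1 ≤ n) {τ : MulChar F ℂ}
    (hτ : orderOf τ = n.gcd (Fintype.card F - 1)) {x : F} (hx : x ≠ 0) (h1 : τ x = 1) :
    IsNthPow n x := by
  classical
  set q := Fintype.card F with hq
  set d := n.gcd (q - 1) with hd
  obtain ⟨g, hg⟩ := IsCyclic.exists_generator (α := Fˣ)
  have hiff : ∀ k : ℕ, (τ ((g : Fˣ) : F)) ^ k = 1 ↔ τ ^ k = 1 := by
    intro k
    constructor
    · intro h
      refine MulChar.ext fun a => ?_
      obtain ⟨m, hm⟩ := (isOfFinOrder_of_finite g).mem_powers_iff_mem_zpowers.mpr (hg a)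
      have hm' : g ^ m = a := hm
      have hma : ((a : Fˣ) : F) = ((g : Fˣ) : F) ^ m := by
        rw [← hm', Units.val_pow_eq_pow_val]
      rw [MulChar.pow_apply_coe, MulChar.one_apply_coe, hma, map_pow, ← pow_mul,
        mul_comm, pow_mul, h, one_pow]
    · intro h
      rw [← MulChar.pow_apply_coe, h, MulChar.one_apply_coe]
  have hordg : orderOf (τ ((g : Fˣ) : F)) = d := by
    rw [← hτ]
    exact orderOf_eq_orderOf_iff.mpr hiff
  set xu : Fˣ := Units.mk0 x hx with hxu
  obtain ⟨m, hm⟩ := (isOfFinOrder_of_finite g).mem_powers_iff_mem_zpowers.mpr (hg xu)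
  have hm' : g ^ m = xu := hm
  have hxm : x = ((g : Fˣ) : F) ^ m := by
    rw [← Units.val_pow_eq_pow_val, hm']; rfl
  have hdm : d ∣ m := by
    rw [← hordg]
    apply orderOf_dvd_of_pow_eq_one
    rw [← map_pow, ← hxm, h1]
  obtain ⟨k, hk⟩ := hdm
  set A := Nat.gcdA n (q - 1) with hA
  set B := Nat.gcdB n (q - 1) with hB
  set h' : Fˣ := g ^ k with hh'
  have hxu' : h' ^ d = xu := by
    rw [← hm', hk, hh', ← pow_mul, mul_comm]
  have hcard1 : h' ^ ((q - 1 : ℕ) : ℤ) = 1 := by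
    rw [zpow_natCast]
    have : q - 1 = Fintype.card Fˣ := (Fintype.card_units (α := F)).symm
    rw [this, pow_card_eq_one]
  have e2 : h' ^ ((n : ℤ) * A + ((q - 1 : ℕ) : ℤ) * B) = xu := by
    rw [← Nat.gcd_eq_gcd_ab n (q - 1), zpow_natCast, ← hd, hxu']
  have e1 : h' ^ ((n : ℤ) * A + ((q - 1 : ℕ) : ℤ) * B) = (h' ^ A) ^ (n : ℤ) := by
    rw [zpow_add, zpow_mul ((h' : Fˣ)) ((q - 1 : ℕ) : ℤ) B, hcard1, one_zpow, mul_one,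
      mul_comm, zpow_mul]
  refine ⟨((h' ^ A : Fˣ) : F), Units.ne_zero _, ?_⟩
  have hzn : (h' ^ A) ^ n = xu := by
    have := e1.symm.trans e2
    rwa [zpow_natCast] at this
  calc ((h' ^ A : Fˣ) : F) ^ n = (((h' ^ A) ^ n : Fˣ) : F) := by
        rw [Units.val_pow_eq_pow_val]
    _ = x := by rw [hzn]; rfl

/-- If the character packet sum is nonzero at `x`, then `x` is a nonzero n-th power. -/
lemma isNthPow_of_packet_ne_zero (hn1 : 1 ≤ n) {τ : MulChar F ℂ}
    (hτ : orderOf τ = n.gcd (Fintype.card F - 1)) {x : F}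
    (hf : ∑ j ∈ Finset.range (n.gcd (Fintype.card F - 1)), (τ ^ j) x ≠ 0) :
    IsNthPow n x := by
  set d := n.gcd (Fintype.card F - 1) with hd
  have hd0 : 0 < d := Nat.gcd_pos_of_pos_left _ (by omega)
  by_cases hx : x = 0
  · exfalso
    apply hf
    apply Finset.sum_eq_zero
    intro j _
    exact MulChar.map_nonunit _ (by rw [hx]; exact not_isUnit_zero)
  by_contra hnot
  apply hf
  have hτx : τ x ≠ 1 := fun h => hnot (ker_isNthPow hn1 hτ hx h)
  have hxu : IsUnit x := Ne.isUnit hx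
  have : ∀ j ∈ Finset.range d, (τ ^ j) x = (τ x) ^ j := by
    intro j _
    rw [← hxu.unit_spec]
    exact MulChar.pow_apply_coe τ j hxu.unit
  rw [Finset.sum_congr rfl this, geom_sum_eq hτx]
  have : (τ x) ^ d = 1 := by
    rw [← hxu.unit_spec, ← MulChar.pow_apply_coe τ d hxu.unit, ← hτ, pow_orderOf_eq_one]
    exact MulChar.one_apply_coe hxu.unit
  rw [this, sub_self, zero_div]

end Weil

section Weil2

variable {F : Type*} [Field F] [Fintype F] {n : ℕ}

lemma norm_mulChar_eq_one (χ : MulChar F ℂ) {x : F} (hx : x ≠ 0) : ‖χ x‖ = 1 := by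
  have h : (χ x) ^ (Fintype.card F - 1) = 1 := by
    rw [← map_pow, FiniteField.pow_card_sub_one_eq_one x hx, map_one]
  exact Complex.norm_eq_one_of_pow_eq_one h
    (by have := Fintype.one_lt_card (α := F); omega)

lemma twist_sum (χ ψ : MulChar F ℂ) {t : F} (ht : t ≠ 0) :
    ∑ a : F, χ a * ψ (t - a) = χ t * ψ t * jacobiSum χ ψ := by
  rw [jacobiSum, Finset.mul_sum, ← Equiv.sum_comp (Equiv.mulLeft₀ t ht)
    (fun a => χ a * ψ (t - a))]
  apply Finset.sum_congr rfl
  intro x _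
  have h1 : (Equiv.mulLeft₀ t ht) x = t * x := rfl
  have h2 : t - t * x = t * (1 - x) := by ring
  rw [h1, h2, map_mul, map_mul]
  ring

lemma conj_jacobiSum (χ ψ : MulChar F ℂ) :
    (starRingEnd ℂ) (jacobiSum χ ψ) = jacobiSum χ⁻¹ ψ⁻¹ := by
  rw [jacobiSum, jacobiSum, map_sum]
  apply Finset.sum_congr rfl
  intro x _
  rw [map_mul, ← MulChar.star_apply', ← MulChar.star_apply']
  rfl

lemma norm_jacobiSum {χ ψ : MulChar F ℂ} (hχ : χ ≠ 1) (hψ : ψ ≠ 1) (hχψ : χ * ψ ≠ 1) :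
    ‖jacobiSum χ ψ‖ = Real.sqrt (Fintype.card F) := by
  have hring : ringChar ℂ ≠ ringChar F := by
    obtain ⟨e, hp, hc⟩ := FiniteField.card F (ringChar F)
    rw [ringChar.eq_zero]
    exact fun h => hp.ne_zero h.symm
  have h := jacobiSum_mul_jacobiSum_inv hring hχ hψ hχψ
  have h2 : (jacobiSum χ ψ) * (starRingEnd ℂ) (jacobiSum χ ψ) = (Fintype.card F : ℂ) := by
    rw [conj_jacobiSum]; exact h
  rw [Complex.mul_conj] at h2
  have h4 : Complex.normSq (jacobiSum χ ψ) = (Fintype.card F : ℝ) := by exact_mod_cast h2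
  rw [Complex.norm_def, h4]

end Weil2

section Weil3

variable {F : Type*} [Field F] [Fintype F] {n : ℕ}

lemma sum_two_nth_pows (hn1 : 1 ≤ n)
    (hnum : 3 * ((n.gcd (Fintype.card F - 1) : ℝ) - 1) +
        ((n.gcd (Fintype.card F - 1) : ℝ) - 1) * ((n.gcd (Fintype.card F - 1) : ℝ) - 2) *
          Real.sqrt (Fintype.card F) < (Fintype.card F : ℝ) - 2) :
    ∀ t : F, t ≠ 0 → ∃ a b : F, IsNthPow n a ∧ IsNthPow n b ∧ a + b = t := by
  classical
  intro t ht
  set q := Fintype.card F with hq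
  have hq2 : 2 ≤ q := Fintype.one_lt_card
  set d := n.gcd (q - 1) with hd
  have hd0 : 0 < d := Nat.gcd_pos_of_pos_left _ (by omega)
  have hddvd : d ∣ q - 1 := Nat.gcd_dvd_right n (q - 1)
  obtain ⟨τ, hτ⟩ := MulChar.exists_mulChar_orderOf F hddvd
    (Complex.isPrimitiveRoot_exp d hd0.ne')
  have hpow_ne : ∀ j ∈ Finset.Ico 1 d, τ ^ j ≠ 1 := by
    intro j hj h1
    rw [Finset.mem_Ico] at hj
    have := Nat.le_of_dvd (by omega) (hτ ▸ orderOf_dvd_of_pow_eq_one h1)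
    omega
  set f : F → ℂ := fun x => ∑ j ∈ Finset.range d, (τ ^ j) x with hf
  set T : ℂ := ∑ a : F, f a * f (t - a) with hT
  set J : ℕ → ℕ → ℂ :=
    fun j i => (τ ^ j) t * (τ ^ i) t * jacobiSum (τ ^ j) (τ ^ i) with hJ
  have hTJ : T = ∑ j ∈ Finset.range d, ∑ i ∈ Finset.range d, J j i := by
    rw [hT]
    have : ∀ a : F, f a * f (t - a) =
        ∑ j ∈ Finset.range d, ∑ i ∈ Finset.range d, (τ ^ j) a * (τ ^ i) (t - a) := by
      intro a
      rw [hf, Finset.sum_mul_sum]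
    rw [Finset.sum_congr rfl fun a _ => this a, Finset.sum_comm]
    apply Finset.sum_congr rfl
    intro j _
    rw [Finset.sum_comm]
    apply Finset.sum_congr rfl
    intro i _
    exact twist_sum (τ ^ j) (τ ^ i) ht
  -- norms of single character values
  have hnv : ∀ j : ℕ, ‖(τ ^ j) t‖ = 1 := fun j => norm_mulChar_eq_one _ ht
  have h00 : J 0 0 = (q : ℂ) - 2 := by
    simp only [hJ, pow_zero]
    rw [MulChar.one_apply (Ne.isUnit ht), jacobiSum_one_one, one_mul, one_mul, hq]
  have hrow : ∀ i ∈ Finset.Ico 1 d, ‖J 0 i‖ ≤ 1 := by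
    intro i hi
    simp only [hJ, pow_zero]
    rw [MulChar.one_apply (Ne.isUnit ht), jacobiSum_one_nontrivial (hpow_ne i hi), one_mul]
    have := hnv i
    simp [norm_mul, this]
  have hcol : ∀ j ∈ Finset.Ico 1 d, ‖J j 0‖ ≤ 1 := by
    intro j hj
    simp only [hJ, pow_zero]
    rw [MulChar.one_apply (Ne.isUnit ht), mul_one, jacobiSum_comm,
      jacobiSum_one_nontrivial (hpow_ne j hj)]
    have := hnv j
    simp [norm_mul, this]
  have hpair : ∀ j ∈ Finset.Ico 1 d, ‖J j (d - j)‖ ≤ 1 := by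
    intro j hj
    rw [Finset.mem_Ico] at hj
    have hinv : τ ^ (d - j) = (τ ^ j)⁻¹ := by
      refine eq_inv_of_mul_eq_one_left ?_
      rw [← pow_add]
      have : d - j + j = d := by omega
      rw [this, ← hτ, pow_orderOf_eq_one]
    simp only [hJ]
    rw [hinv, jacobiSum_nontrivial_inv (hpow_ne j (Finset.mem_Ico.mpr hj))]
    have h1 := hnv j
    have h2 : ‖(τ ^ j)⁻¹ t‖ = 1 := by rw [← hinv]; exact hnv _
    have h3 : ‖(τ ^ j) (-1)‖ = 1 := norm_mulChar_eq_one _ (neg_ne_zero.mpr one_ne_zero)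
    simp [norm_mul, h1, h2, h3]
  have hgen : ∀ j ∈ Finset.Ico 1 d, ∀ i ∈ Finset.Ico 1 d, i ≠ d - j →
      ‖J j i‖ ≤ Real.sqrt q := by
    intro j hj i hi hne
    rw [Finset.mem_Ico] at hj hi
    have hmul : τ ^ j * τ ^ i ≠ 1 := by
      rw [← pow_add]
      intro h1
      have hdvd2 := hτ ▸ orderOf_dvd_of_pow_eq_one h1
      obtain ⟨c, hc⟩ := hdvd2
      have hc1 : c = 1 := by
        rcases Nat.lt_or_ge c 1 with h | h
        · exfalso
          have hcz : c = 0 := by omega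
          rw [hcz, Nat.mul_zero] at hc
          omega
        rcases Nat.lt_or_ge c 2 with h2 | h2
        · omega
        · exfalso
          have h3 : d * 2 ≤ d * c := Nat.mul_le_mul_left d h2
          omega
      rw [hc1, Nat.mul_one] at hc
      omega
    simp only [hJ]
    rw [norm_mul, norm_mul, hnv, hnv, one_mul, one_mul,
      norm_jacobiSum (hpow_ne j (Finset.mem_Ico.mpr hj)) (hpow_ne i (Finset.mem_Ico.mpr hi)) hmul]
  -- assemble the bound and conclude
  have hsqnn : (0:ℝ) ≤ Real.sqrt q := Real.sqrt_nonneg _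
  set S := Finset.Ico 1 d with hS
  have hcardS : (S.card : ℝ) = (d : ℝ) - 1 := by
    rw [hS, Nat.card_Ico]
    have : (1:ℕ) ≤ d := hd0
    push_cast [this]
    ring
  have hinner : ∀ j ∈ S, ∑ i ∈ S, ‖J j i‖ ≤ 1 + ((d:ℝ) - 2) * Real.sqrt q := by
    intro j hj
    have hd2 : 2 ≤ d := by
      rw [hS, Finset.mem_Ico] at hj; omega
    have hdj : d - j ∈ S := by
      rw [hS, Finset.mem_Ico] at hj ⊢; omega
    rw [← Finset.add_sum_erase _ _ hdj]
    have hb : ∑ i ∈ S.erase (d - j), ‖J j i‖ ≤ ((d:ℝ) - 2) * Real.sqrt q := by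
      have hcard : ((S.erase (d - j)).card : ℝ) = (d : ℝ) - 2 := by
        rw [Finset.card_erase_of_mem hdj, hS, Nat.card_Ico,
          Nat.cast_sub (show 1 ≤ d - 1 by omega), Nat.cast_sub (show 1 ≤ d from hd0)]
        push_cast
        ring
      calc ∑ i ∈ S.erase (d - j), ‖J j i‖
          ≤ ∑ _i ∈ S.erase (d - j), Real.sqrt q := by
            apply Finset.sum_le_sum
            intro i hi
            exact hgen j hj i (Finset.mem_of_mem_erase hi) (Finset.ne_of_mem_erase hi)
        _ = ((S.erase (d - j)).card : ℝ) * Real.sqrt q := by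
            rw [Finset.sum_const, nsmul_eq_mul]
        _ = ((d:ℝ) - 2) * Real.sqrt q := by rw [hcard]
    have hp := hpair j hj
    linarith
  have h0ni : (0:ℕ) ∉ S := by rw [hS]; simp
  have hsplit : Finset.range d = insert 0 S := by
    ext x
    rw [hS]
    simp only [Finset.mem_range, Finset.mem_insert, Finset.mem_Ico]
    omega
  have hTexp : T = (J 0 0 + ∑ i ∈ S, J 0 i) + ∑ j ∈ S, (J j 0 + ∑ i ∈ S, J j i) := by
    rw [hTJ, hsplit, Finset.sum_insert h0ni, Finset.sum_insert h0ni]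
    congr 1
    apply Finset.sum_congr rfl
    intro j _
    rw [Finset.sum_insert h0ni]
  have hEnorm : ‖T - ((q:ℂ) - 2)‖ ≤
      3 * ((d:ℝ) - 1) + ((d:ℝ) - 1) * ((d:ℝ) - 2) * Real.sqrt q := by
    have hTE : T - ((q:ℂ) - 2) =
        (∑ i ∈ S, J 0 i) + ∑ j ∈ S, (J j 0 + ∑ i ∈ S, J j i) := by
      rw [hTexp, h00]; ring
    rw [hTE]
    have hb1 : ‖∑ i ∈ S, J 0 i‖ ≤ (d:ℝ) - 1 := by
      calc ‖∑ i ∈ S, J 0 i‖ ≤ ∑ i ∈ S, ‖J 0 i‖ := norm_sum_le _ _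
        _ ≤ ∑ _i ∈ S, (1:ℝ) := Finset.sum_le_sum hrow
        _ = (S.card : ℝ) := by rw [Finset.sum_const, nsmul_eq_mul, mul_one]
        _ = (d:ℝ) - 1 := hcardS
    have hb2 : ‖∑ j ∈ S, (J j 0 + ∑ i ∈ S, J j i)‖ ≤
        ((d:ℝ) - 1) * (2 + ((d:ℝ) - 2) * Real.sqrt q) := by
      calc ‖∑ j ∈ S, (J j 0 + ∑ i ∈ S, J j i)‖
          ≤ ∑ j ∈ S, ‖J j 0 + ∑ i ∈ S, J j i‖ := norm_sum_le _ _
        _ ≤ ∑ _j ∈ S, (2 + ((d:ℝ) - 2) * Real.sqrt q) := by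
            apply Finset.sum_le_sum
            intro j hj
            calc ‖J j 0 + ∑ i ∈ S, J j i‖ ≤ ‖J j 0‖ + ‖∑ i ∈ S, J j i‖ := norm_add_le _ _
              _ ≤ 1 + (1 + ((d:ℝ) - 2) * Real.sqrt q) := by
                  have := (norm_sum_le S (J j)).trans (hinner j hj)
                  have hc := hcol j hj
                  linarith
              _ = 2 + ((d:ℝ) - 2) * Real.sqrt q := by ring
        _ = (S.card : ℝ) * (2 + ((d:ℝ) - 2) * Real.sqrt q) := by
            rw [Finset.sum_const, nsmul_eq_mul]
        _ = ((d:ℝ) - 1) * (2 + ((d:ℝ) - 2) * Real.sqrt q) := by rw [hcardS]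
    calc ‖(∑ i ∈ S, J 0 i) + ∑ j ∈ S, (J j 0 + ∑ i ∈ S, J j i)‖
        ≤ ‖∑ i ∈ S, J 0 i‖ + ‖∑ j ∈ S, (J j 0 + ∑ i ∈ S, J j i)‖ := norm_add_le _ _
      _ ≤ ((d:ℝ) - 1) + ((d:ℝ) - 1) * (2 + ((d:ℝ) - 2) * Real.sqrt q) := by linarith
      _ = 3 * ((d:ℝ) - 1) + ((d:ℝ) - 1) * ((d:ℝ) - 2) * Real.sqrt q := by ring
  have hTne : T ≠ 0 := by
    intro h0
    rw [h0, zero_sub, norm_neg] at hEnorm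
    have hcast : ((q:ℂ) - 2) = (((q:ℝ) - 2 : ℝ) : ℂ) := by push_cast; ring
    rw [hcast, Complex.norm_real, Real.norm_eq_abs, abs_of_nonneg (by
      have : (2:ℝ) ≤ (q:ℝ) := by exact_mod_cast hq2
      linarith)] at hEnorm
    linarith
  rw [hT] at hTne
  obtain ⟨a, _, ha⟩ := Finset.exists_ne_zero_of_sum_ne_zero hTne
  have ha1 : f a ≠ 0 := left_ne_zero_of_mul ha
  have ha2 : f (t - a) ≠ 0 := right_ne_zero_of_mul ha
  simp only [hf] at ha1 ha2
  exact ⟨a, t - a, isNthPow_of_packet_ne_zero hn1 hτ ha1,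
    isNthPow_of_packet_ne_zero hn1 hτ ha2, by ring⟩

end Weil3

lemma numeric_ineq {q d : ℕ} (hq3 : 3 ≤ q)
    (h : d = 1 ∨ (d = 2 ∧ 6 ≤ q) ∨ (3 ≤ d ∧ (d - 1) ^ 4 < q)) :
    3 * ((d:ℝ) - 1) + ((d:ℝ) - 1) * ((d:ℝ) - 2) * Real.sqrt q < (q:ℝ) - 2 := by
  have hq0 : (3:ℝ) ≤ (q:ℝ) := by exact_mod_cast hq3
  obtain rfl | ⟨rfl, h6⟩ | ⟨hd3, hlt⟩ := h
  · norm_num; linarith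
  · have : (6:ℝ) ≤ (q:ℝ) := by exact_mod_cast h6
    norm_num; linarith
  · set s := Real.sqrt q with hs
    have hs0 : 0 ≤ s := Real.sqrt_nonneg _
    have hs2 : s ^ 2 = (q:ℝ) := Real.sq_sqrt (by positivity)
    set x : ℝ := (d:ℝ) - 1 with hx
    have hx2 : (2:ℝ) ≤ x := by
      have : (3:ℝ) ≤ (d:ℝ) := by exact_mod_cast hd3
      rw [hx]; linarith
    have hlt' : x ^ 4 < s ^ 2 := by
      rw [hs2, hx]
      have : ((d - 1 : ℕ) : ℝ) ^ 4 < (q : ℝ) := by exact_mod_cast hlt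
      rw [Nat.cast_sub (by omega : 1 ≤ d)] at this
      convert this using 3
      norm_num
    have hxs : x ^ 2 < s := by nlinarith [sq_nonneg (x ^ 2 - s), sq_nonneg (x ^ 2 + s)]
    have e1 : 0 ≤ s * (s - x ^ 2) := mul_nonneg hs0 (by linarith)
    have e2 : x * x ^ 2 < x * s := by
      apply mul_lt_mul_of_pos_left hxs
      linarith
    have e3 : 3 * x + 2 ≤ x ^ 3 := by nlinarith [sq_nonneg (x + 1), sq_nonneg (x - 2)]
    nlinarith [e1, e2, e3]


theorem diam_le_9 {p e n : ℕ} (hp : p.Prime) (he : 0 < e)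
    (F : Type*) [Field F] [Fintype F] (hF : Fintype.card F = p ^ e)
    (hn1 : 1 ≤ n) (hn : n ≤ p ^ e - 1)
    (hstrong : IsStrongDigraph (monomialArc (F := F) n n))
    (hq : (n - 1) ^ 4 < p ^ e) :
    ddiam (monomialArc (F := F) n n) ≤ 9 := by
  classical
  rw [← hF] at hn hq
  have hq2 : 2 ≤ Fintype.card F := Fintype.one_lt_card
  set q := Fintype.card F with hqdef
  have hmaster : ∀ c : F, RepOK n c := by
    by_cases hqtwo : q = 2
    · exact repOK_card_two hqtwo hn1
    have hq3 : 3 ≤ q := by omega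
    set d := n.gcd (q - 1) with hd
    have hd1 : 1 ≤ d := Nat.gcd_pos_of_pos_left _ (by omega)
    have hdn : d ∣ n := Nat.gcd_dvd_left _ _
    have hdq : d ∣ q - 1 := Nat.gcd_dvd_right _ _
    by_cases hsm : d = 2 ∧ q < 6
    · obtain ⟨hd2, hq6⟩ := hsm
      have h2n : 2 ∣ n := hd2 ▸ hdn
      have hqodd : 2 ∣ q - 1 := hd2 ▸ hdq
      have hq35 : q = 3 ∨ q = 5 := by omega
      rcases hq35 with h3 | h5
      · exact repOK_card_three h3 h2n hn1
      · have h4n : ¬ 4 ∣ n := by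
          intro h4
          have h41 : (4:ℕ) ∣ q - 1 := by rw [h5]
          have h42 : (4:ℕ) ∣ d := Nat.dvd_gcd h4 h41
          omega
        exact repOK_card_five h5 h2n h4n hn1
    · -- Weil case
      have hnum : 3 * ((d:ℝ) - 1) + ((d:ℝ) - 1) * ((d:ℝ) - 2) * Real.sqrt q < (q:ℝ) - 2 := by
        apply numeric_ineq hq3
        rcases Nat.lt_or_ge d 2 with h | h
        · left; omega
        rcases Nat.lt_or_ge d 3 with h' | h'
        · right; left
          refine ⟨by omega, ?_⟩
          by_contra h6
          exact hsm ⟨by omega, by omega⟩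
        · right; right
          refine ⟨h', ?_⟩
          have hdn' : d ≤ n := Nat.le_of_dvd (by omega) hdn
          calc (d-1)^4 ≤ (n-1)^4 := Nat.pow_le_pow_left (by omega) 4
            _ < q := hq
      have hH2 : ∃ h : F, IsNthPow n h ∧ h ≠ 1 := by
        by_contra hno
        push_neg at hno
        have hall : ∀ x : F, x ≠ 0 → x ^ n = 1 := fun x hx => hno (x ^ n) ⟨x, hx, rfl⟩
        obtain ⟨g, hg⟩ := IsCyclic.exists_generator (α := Fˣ)
        have hord : orderOf g = q - 1 := by
          rw [orderOf_eq_card_of_forall_mem_zpowers hg, Nat.card_eq_fintype_card]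
          exact Fintype.card_units (α := F)
        have hgn : g ^ n = 1 := by
          ext
          rw [Units.val_pow_eq_pow_val, Units.val_one]
          exact hall ((g : Fˣ) : F) (Units.ne_zero g)
        have hdvd : q - 1 ∣ n := hord ▸ orderOf_dvd_of_pow_eq_one hgn
        have hnq : n = q - 1 := by
          have := Nat.le_of_dvd (by omega) hdvd
          omega
        have hdq1 : d = q - 1 := by rw [hd, hnq, Nat.gcd_self]
        rcases Nat.lt_or_ge d 2 with h | h
        · omega
        rcases Nat.lt_or_ge d 3 with h' | h'
        · exact hsm ⟨by omega, by omega⟩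
        · have hdn' : d ≤ n := Nat.le_of_dvd (by omega) hdn
          have h4 : (d-1)^4 ≤ (n-1)^4 := Nat.pow_le_pow_left (by omega) 4
          have hlt : (d-1)^4 < q := lt_of_le_of_lt h4 hq
          set m := d - 1 with hm
          have hm2 : 2 ≤ m := by omega
          have hqm : q = m + 2 := by omega
          have h8 : (8:ℕ) ≤ m ^ 3 := by
            calc (8:ℕ) = 2 ^ 3 := rfl
              _ ≤ m ^ 3 := Nat.pow_le_pow_left hm2 3
          have h8m : 8 * m ≤ m ^ 4 := by
            have := Nat.mul_le_mul_right m h8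
            rwa [show m ^ 3 * m = m ^ 4 from by ring] at this
          omega
      exact repOK_of_sum2 (sum_two_nth_pows hn1 hnum) hH2
  have hwalks := walks_of_rep hn1 hmaster
  have h9 := ddiam_le_of_walks hwalks
  exact h9.trans_eq (by norm_num)
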